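/- Let B be a barcode over S = ℝ whose critical points all lie in the interval [m, M] and are pairwise at distance at least ε > 0. Let h ≥ 2 be an integer and let δ be a real number with 0 < δ ≤ ε/h. Let N be a natural number with m + Nδ ≥ M. Then the finite set S′ = {m, m+δ, m+2δ, …, m+Nδ} admits an h-approximation of B. -/
import Mathlib


/-!
Barcodes over a totally ordered set `S`.

A bar is a nonempty interval of an ambient subset `P ⊆ S` (for a bar "in `S`"
take `P = Set.univ`; for a bar of a restricted barcode `B|S′` take `P = ↑S′`).
Births and deaths live in `S ∪ {−∞, +∞}`, modelled as `WithBot (WithTop S)`;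
following the standing assumption, every bar is equipped with its birth
(greatest lower bound) and death (least upper bound) there.
A barcode (finite multiset of bars) is modelled as an indexed family
`B : Fin N → BarIn P`; multiplicities are accounted for by the indexing.
-/

open scoped Classical

noncomputable section

variable {S : Type*} [LinearOrder S]

/-- The embedding of `S` into `S ∪ {−∞, +∞}`. -/
def emb (x : S) : WithBot (WithTop S) := ((x : WithTop S) : WithBot (WithTop S))

lemma emb_le_emb {x y : S} : emb x ≤ emb y ↔ x ≤ y := by simp [emb]

/-- A bar in the totally ordered set `P ⊆ S`: a nonempty subset of `P` closed
under betweenness (relative to `P`), together with its birth (infimum) and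
death (supremum) taken in `S ∪ {−∞, +∞}`. -/
structure BarIn (P : Set S) where
  carrier : Set S
  subset_amb : carrier ⊆ P
  nonempty : carrier.Nonempty
  isInterval : ∀ ⦃s u : S⦄, s ∈ carrier → u ∈ carrier →
      ∀ ⦃t : S⦄, t ∈ P → s ≤ t → t ≤ u → t ∈ carrier
  birth : WithBot (WithTop S)
  death : WithBot (WithTop S)
  birth_glb : IsGLB (emb '' carrier) birth
  death_lub : IsLUB (emb '' carrier) death

namespace BarIn

variable {P : Set S}

/-- A pointbar is a bar consisting of a single element. -/
def Pointbar (I : BarIn P) : Prop := ∃ a : S, I.carrier = {a}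

/-- Bars `I, J` (with `b(I) ≤ b(J)`) are interlaced if `b(I) < b(J) ≤ d(I) < d(J)`. -/
def Interlaced (I J : BarIn P) : Prop :=
  I.birth < J.birth ∧ J.birth ≤ I.death ∧ I.death < J.death

/-- Bars `I, J` are non-separated if `d(I) < b(J)` and no element of the ambient
totally ordered set `P` lies strictly between `d(I)` and `b(J)`. -/
def NonSep (I J : BarIn P) : Prop :=
  I.death < J.birth ∧ ∀ s ∈ P, ¬ (I.death < emb s ∧ emb s < J.birth)

/-- Two bars form an interacting pair if (in one order or the other) they are
interlaced or non-separated. -/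
def Interacting (I J : BarIn P) : Prop :=
  I.Interlaced J ∨ J.Interlaced I ∨ I.NonSep J ∨ J.NonSep I

end BarIn

/-- The quiver codimension of a barcode: the number of interacting pairs of
bars, counted with multiplicity (i.e. the number of index pairs `p < q` whose
bars interact). -/
def pairCount {N : ℕ} {P : Set S} (B : Fin N → BarIn P) : ℕ :=
  ((Finset.univ : Finset (Fin N × Fin N)).filter
    (fun pq => pq.1 < pq.2 ∧ (B pq.1).Interacting (B pq.2))).card

/-- The finite set `I ∩ S′`, for a bar `I` in `S` and a finite `S′ ⊆ S`. -/
def interFinset (I : BarIn (Set.univ : Set S)) (S' : Finset S) : Finset S :=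
  S'.filter (fun s => s ∈ I.carrier)

lemma interFinset_nonempty {I : BarIn (Set.univ : Set S)} {S' : Finset S}
    (h : (I.carrier ∩ ↑S').Nonempty) : (interFinset I S').Nonempty := by
  obtain ⟨x, hx1, hx2⟩ := h
  exact ⟨x, Finset.mem_filter.2 ⟨hx2, hx1⟩⟩

/-- Restriction of a bar `I` in `S` to a finite subset `S′ ⊆ S` meeting `I`:
the bar `I ∩ S′` of the totally ordered set `S′`, whose birth and death are the
min and max of the finite nonempty set `I ∩ S′`. -/
def BarIn.restrict (I : BarIn (Set.univ : Set S)) (S' : Finset S)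
    (h : (I.carrier ∩ ↑S').Nonempty) : BarIn (↑S' : Set S) where
  carrier := I.carrier ∩ ↑S'
  subset_amb := Set.inter_subset_right
  nonempty := h
  isInterval := fun s u hs hu t ht hst htu =>
    ⟨I.isInterval hs.1 hu.1 (Set.mem_univ t) hst htu, ht⟩
  birth := emb ((interFinset I S').min' (interFinset_nonempty h))
  death := emb ((interFinset I S').max' (interFinset_nonempty h))
  birth_glb := by
    constructor
    · rintro y ⟨x, hx, rfl⟩
      exact emb_le_emb.2 (Finset.min'_le _ x (Finset.mem_filter.2 ⟨hx.2, hx.1⟩))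
    · intro y hy
      have hmem := (interFinset I S').min'_mem (interFinset_nonempty h)
      simp only [interFinset, Finset.mem_filter] at hmem
      exact hy ⟨_, ⟨hmem.2, hmem.1⟩, rfl⟩
  death_lub := by
    constructor
    · rintro y ⟨x, hx, rfl⟩
      exact emb_le_emb.2 (Finset.le_max' _ x (Finset.mem_filter.2 ⟨hx.2, hx.1⟩))
    · intro y hy
      have hmem := (interFinset I S').max'_mem (interFinset_nonempty h)
      simp only [interFinset, Finset.mem_filter] at hmem
      exact hy ⟨_, ⟨hmem.2, hmem.1⟩, rfl⟩

/-- The set of critical points of the barcode `B`: all births and deaths of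
bars of `B` that lie in `S`. -/
def criticalPts {N : ℕ} (B : Fin N → BarIn (Set.univ : Set S)) : Set S :=
  {z : S | ∃ p : Fin N, (B p).birth = emb z ∨ (B p).death = emb z}

/-- `z` and `z'` are consecutive elements of `Z`. -/
def ConsecIn (Z : Set S) (z z' : S) : Prop :=
  z ∈ Z ∧ z' ∈ Z ∧ z < z' ∧ ∀ w ∈ Z, ¬ (z < w ∧ w < z')

/-- The finite set `S′ ⊆ S` admits an `h`-approximation of the barcode `B`
(with critical points `Z = {z_1 < ⋯ < z_m}`):
(i) some `s, t ∈ S′` satisfy `s ≤ z_1` and `z_m ≤ t`;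
(ii) whenever bars `I, J` of `B` with `d(I) = z_i`, `b(J) = z_{i+1}` for
consecutive critical points `z_i < z_{i+1}` do not form an interacting pair,
some `s ∈ S′` satisfies `z_i < s < z_{i+1}`;
(iii) for consecutive critical points `z_i < z_{i+1}`, `S′` contains at least
`h` elements of the closed interval `[z_i, z_{i+1}]`. -/
def IsHApprox {N : ℕ} (h : ℕ) (B : Fin N → BarIn (Set.univ : Set S))
    (S' : Finset S) : Prop :=
  ((∃ s ∈ S', ∀ z ∈ criticalPts B, s ≤ z) ∧ (∃ t ∈ S', ∀ z ∈ criticalPts B, z ≤ t))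
  ∧ (∀ z z', ConsecIn (criticalPts B) z z' →
      ∀ p q : Fin N, (B p).death = emb z → (B q).birth = emb z' →
        ¬ (B p).Interacting (B q) → ∃ s ∈ S', z < s ∧ s < z')
  ∧ (∀ z z', ConsecIn (criticalPts B) z z' →
      h ≤ (S'.filter (fun s => z ≤ s ∧ s ≤ z')).card)

/-- The number of interacting pairs of bars (counted with multiplicity) of the
restricted barcode `B|S′`, whose bars are the nonempty intersections `I ∩ S′`
for bars `I` of `B`, with interactions taken in the order on `S′`. -/
def restrictedPairCount {N : ℕ} (B : Fin N → BarIn (Set.univ : Set S))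
    (S' : Finset S) : ℕ :=
  ((Finset.univ : Finset (Fin N × Fin N)).filter
    (fun pq => pq.1 < pq.2 ∧
      ∃ (h1 : ((B pq.1).carrier ∩ ↑S').Nonempty)
        (h2 : ((B pq.2).carrier ∩ ↑S').Nonempty),
        ((B pq.1).restrict S' h1).Interacting ((B pq.2).restrict S' h2))).card


/-- Let `B` be a barcode over `S = ℝ` whose critical points
all lie in `[m, M]` and are pairwise at distance at least `ε > 0`. Let `h ≥ 2`
be an integer, let `0 < δ ≤ ε / h`, and let `n` be a natural number with
`m + nδ ≥ M`. Then the finite set `S′ = {m, m+δ, m+2δ, …, m+nδ}` admits an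
`h`-approximation of `B`. -/
theorem grid_isHApprox {N : ℕ} (B : Fin N → BarIn (Set.univ : Set ℝ))
    (m M ε δ : ℝ) (h : ℕ) (hh : 2 ≤ h)
    (hε : 0 < ε) (hδ : 0 < δ)
    (hbound : ∀ z ∈ criticalPts B, m ≤ z ∧ z ≤ M)
    (hsep : ∀ z ∈ criticalPts B, ∀ z' ∈ criticalPts B, z ≠ z' → ε ≤ |z - z'|)
    (hδε : δ ≤ ε / h)
    (n : ℕ) (hn : M ≤ m + n * δ) :
    IsHApprox h B ((Finset.range (n + 1)).image (fun k : ℕ => m + k * δ)) := by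
  have hhpos : (0:ℝ) < h := by
    have : (2:ℝ) ≤ h := by exact_mod_cast hh
    linarith
  have hhδ : (h:ℝ) * δ ≤ ε := by
    have := (le_div_iff₀ hhpos).1 hδε
    linarith
  have hδltε : δ < ε := by
    have h2δ : 2 * δ ≤ (h:ℝ) * δ := by
      apply mul_le_mul_of_nonneg_right _ hδ.le
      exact_mod_cast hh
    linarith
  have memS' : ∀ k : ℕ, k ≤ n →
      m + k * δ ∈ (Finset.range (n + 1)).image (fun k : ℕ => m + k * δ) := by
    intro k hk
    exact Finset.mem_image.2 ⟨k, Finset.mem_range.2 (Nat.lt_succ_of_le hk), rfl⟩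
  refine ⟨⟨⟨m, ?_, fun z hz => (hbound z hz).1⟩,
      ⟨m + n * δ, memS' n le_rfl, fun z hz => le_trans (hbound z hz).2 hn⟩⟩, ?_, ?_⟩
  · simpa using memS' 0 (Nat.zero_le n)
  · -- part (ii)
    rintro z z' ⟨hz, hz', hlt, -⟩ p q hdp hbq hni
    have hεzz : z + ε ≤ z' := by
      have := hsep z hz z' hz' (ne_of_lt hlt)
      rw [abs_sub_comm, abs_of_pos (sub_pos.2 hlt)] at this
      linarith
    have hex : ∃ k : ℕ, z < m + k * δ :=
      ⟨n, lt_of_lt_of_le (lt_of_lt_of_le hlt (hbound z' hz').2) hn⟩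
    have hk0z : z < m + (Nat.find hex) * δ := Nat.find_spec hex
    have hk0pos : 0 < Nat.find hex := by
      rcases Nat.eq_zero_or_pos (Nat.find hex) with h0 | hp
      · exfalso
        rw [h0] at hk0z
        simp only [Nat.cast_zero, zero_mul, add_zero] at hk0z
        linarith [(hbound z hz).1]
      · exact hp
    have hmin : ¬ z < m + ((Nat.find hex - 1 : ℕ) : ℝ) * δ :=
      Nat.find_min hex (Nat.sub_lt hk0pos one_pos)
    rw [Nat.cast_sub hk0pos] at hmin
    push_neg at hmin
    push_cast at hmin
    ring_nf at hmin
    have hle : m + (Nat.find hex) * δ ≤ z + δ := by nlinarith [hmin]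
    have hkn : Nat.find hex ≤ n := Nat.find_min' hex
      (lt_of_lt_of_le (lt_of_lt_of_le hlt (hbound z' hz').2) hn)
    exact ⟨m + (Nat.find hex) * δ, memS' _ hkn, hk0z, by linarith⟩
  · -- part (iii)
    rintro z z' ⟨hz, hz', hlt, -⟩
    have hεzz : z + ε ≤ z' := by
      have := hsep z hz z' hz' (ne_of_lt hlt)
      rw [abs_sub_comm, abs_of_pos (sub_pos.2 hlt)] at this
      linarith
    have hex : ∃ k : ℕ, z ≤ m + k * δ :=
      ⟨n, le_trans (le_trans hlt.le (le_trans (hbound z' hz').2 hn)) le_rfl⟩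
    have hk1z : z ≤ m + (Nat.find hex) * δ := Nat.find_spec hex
    have hk1le : m + (Nat.find hex) * δ ≤ z + δ := by
      rcases Nat.eq_zero_or_pos (Nat.find hex) with h0 | hp
      · rw [h0]
        simp only [Nat.cast_zero, zero_mul, add_zero]
        linarith [(hbound z hz).1]
      · have hmin : ¬ z ≤ m + ((Nat.find hex - 1 : ℕ) : ℝ) * δ :=
          Nat.find_min hex (Nat.sub_lt hp one_pos)
        rw [Nat.cast_sub hp] at hmin
        push_neg at hmin
        push_cast at hmin
        ring_nf at hmin
        nlinarith [hmin]
    have hsub : (Finset.range h).image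
        (fun j : ℕ => m + ((Nat.find hex + j : ℕ) : ℝ) * δ) ⊆
        ((Finset.range (n + 1)).image (fun k : ℕ => m + k * δ)).filter
          (fun s => z ≤ s ∧ s ≤ z') := by
      intro s hs
      obtain ⟨j, hj, rfl⟩ := Finset.mem_image.1 hs
      have hj' : j < h := Finset.mem_range.1 hj
      have hj1 : ((j:ℝ) + 1) ≤ h := by exact_mod_cast hj'
      have hjδ : ((j:ℝ) + 1) * δ ≤ (h:ℝ) * δ := mul_le_mul_of_nonneg_right hj1 hδ.le
      have hup : m + ((Nat.find hex + j : ℕ) : ℝ) * δ ≤ z' := by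
        push_cast
        nlinarith [hk1le]
      have hlo : z ≤ m + ((Nat.find hex + j : ℕ) : ℝ) * δ := by
        push_cast
        nlinarith [hk1z, (Nat.cast_nonneg j : (0:ℝ) ≤ j)]
      have hkn : Nat.find hex + j ≤ n := by
        have h1 : ((Nat.find hex + j : ℕ) : ℝ) * δ ≤ (n:ℝ) * δ := by
          have := le_trans hup (le_trans (hbound z' hz').2 hn)
          linarith
        have h2 : ((Nat.find hex + j : ℕ) : ℝ) ≤ (n:ℝ) :=
          le_of_mul_le_mul_right h1 hδ
        exact_mod_cast h2
      exact Finset.mem_filter.2 ⟨memS' _ hkn, hlo, hup⟩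
    have hcard : ((Finset.range h).image
        (fun j : ℕ => m + ((Nat.find hex + j : ℕ) : ℝ) * δ)).card = h := by
      rw [Finset.card_image_of_injOn, Finset.card_range]
      intro a _ b _ hab
      dsimp only at hab
      have h1 : ((Nat.find hex + a : ℕ) : ℝ) * δ = ((Nat.find hex + b : ℕ) : ℝ) * δ := by
        linarith [hab]
      have h2 : ((Nat.find hex + a : ℕ) : ℝ) = ((Nat.find hex + b : ℕ) : ℝ) :=
        mul_right_cancel₀ (ne_of_gt hδ) h1
      have h3 : Nat.find hex + a = Nat.find hex + b := by exact_mod_cast h2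
      omega
    calc h = _ := hcard.symm
      _ ≤ _ := Finset.card_le_card hsub

end
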